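/- Let k have characteristic different from 2, let n = 2m + 1 with m ≥ 1, and let α ∈ L be such that the symmetric bilinear form w(x, y) := θ*_{n−1}(α·x·y) on L is nondegenerate. Assume there exists an m-dimensional k-subspace M of L such that θ*_{n−1}(α·u·v) = 0 and θ*_{n−1}(α·θ·u·v) = 0 for all u, v ∈ M (i.e., M is isotropic for both w and θ·w). Then there exist a ∈ k with a ≠ 0 and a unit ℓ ∈ L^× such that α·ℓ² = a; in particular α ∈ k^×·(L^×)². -/

import Mathlib

open Module Submodule LinearMap

section aux
variable {K V : Type*} [Field K] [AddCommGroup V] [Module K V] [FiniteDimensional K V]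

lemma aux_step (g : V →ₗ[K] V) (N : Submodule K V) :
    finrank K N + finrank K N ≤
      finrank K ↥(N ⊓ N.comap g) + finrank K ↥(N ⊔ N.map g) := by
  set W := N ⊔ N.map g with hW
  have hNW : N ≤ W := le_sup_left
  let h : ↥N →ₗ[K] V ⧸ N := N.mkQ ∘ₗ g ∘ₗ N.subtype
  have hker : finrank K (LinearMap.ker h) = finrank K ↥(N ⊓ N.comap g) := by
    have hmap : (LinearMap.ker h).map N.subtype = N ⊓ N.comap g := by
      ext x
      simp only [Submodule.mem_map, LinearMap.mem_ker, Submodule.mem_inf, Submodule.mem_comap]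
      constructor
      · rintro ⟨⟨y, hy⟩, hk, rfl⟩
        refine ⟨hy, ?_⟩
        simpa [h, Submodule.Quotient.mk_eq_zero] using hk
      · rintro ⟨hx, hgx⟩
        exact ⟨⟨x, hx⟩, by simpa [h, Submodule.Quotient.mk_eq_zero] using hgx, rfl⟩
    have h5 := Submodule.finrank_map_subtype_eq N (LinearMap.ker h)
    rw [hmap] at h5
    exact h5.symm
  have hrange : finrank K (LinearMap.range h) + finrank K N ≤ finrank K W := by
    let q : ↥W →ₗ[K] V ⧸ N := N.mkQ ∘ₗ W.subtype
    have hqk : finrank K (LinearMap.ker q) = finrank K N := by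
      have hmap : (LinearMap.ker q).map W.subtype = N := by
        ext x
        simp only [Submodule.mem_map, LinearMap.mem_ker]
        constructor
        · rintro ⟨⟨y, hy⟩, hk, rfl⟩
          simpa [q, Submodule.Quotient.mk_eq_zero] using hk
        · intro hx
          exact ⟨⟨x, hNW hx⟩, by simpa [q, Submodule.Quotient.mk_eq_zero] using hx, rfl⟩
      have h5 := Submodule.finrank_map_subtype_eq W (LinearMap.ker q)
      rw [hmap] at h5
      exact h5.symm
    have hle : LinearMap.range h ≤ LinearMap.range q := by
      rintro z ⟨x, rfl⟩
      exact ⟨⟨g x, Submodule.mem_sup_right (Submodule.mem_map_of_mem x.2)⟩, rfl⟩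
    have h1 := LinearMap.finrank_range_add_finrank_ker q
    have h2 := Submodule.finrank_mono hle
    omega
  have h3 := LinearMap.finrank_range_add_finrank_ker h
  omega

end aux

/-- Let `char k ≠ 2`, `L = k[t]/(f)` with `f` monic separable of degree
`n = 2m + 1`, `m ≥ 1`, `θ` the image of `t`, and `α ∈ L` such that the symmetric form
`w(x, y) = θ*_{n-1}(α x y)` is nondegenerate. If there is an `m`-dimensional subspace `M ⊆ L`
isotropic for both `w` and `θ·w`, then `α ℓ² = a` for some nonzero `a ∈ k` and unit `ℓ ∈ L^×`;
in particular `α ∈ k^× (L^×)²`. -/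
theorem stmt_13 (k : Type*) [Field k] (hchar : ringChar k ≠ 2)
    (f : Polynomial k) (hf : f.Monic) (hsep : f.Separable)
    (m : ℕ) (hm : 1 ≤ m) (hdeg : f.natDegree = 2 * m + 1)
    (coeffTop : AdjoinRoot f →ₗ[k] k)
    (hct1 : coeffTop (AdjoinRoot.root f ^ (f.natDegree - 1)) = 1)
    (hct0 : ∀ i : ℕ, i < f.natDegree - 1 → coeffTop (AdjoinRoot.root f ^ i) = 0)
    (α : AdjoinRoot f)
    (hnd : ∀ x : AdjoinRoot f, (∀ y : AdjoinRoot f, coeffTop (α * x * y) = 0) → x = 0)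
    (M : Submodule k (AdjoinRoot f)) (hMdim : Module.finrank k M = m)
    (hiso : ∀ u ∈ M, ∀ v ∈ M, coeffTop (α * u * v) = 0)
    (hiso' : ∀ u ∈ M, ∀ v ∈ M, coeffTop (α * AdjoinRoot.root f * u * v) = 0) :
    ∃ a : k, a ≠ 0 ∧ ∃ ℓ : AdjoinRoot f, IsUnit ℓ ∧
      α * ℓ ^ 2 = algebraMap k (AdjoinRoot f) a := by
  classical
  set θ := AdjoinRoot.root f with hθdef
  have hf0 : f ≠ 0 := hf.ne_zero
  haveI : FiniteDimensional k (AdjoinRoot f) :=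
    Module.Finite.of_basis (AdjoinRoot.powerBasis hf0).basis
  haveI : Nontrivial (AdjoinRoot f) := AdjoinRoot.nontrivial f (by
    rw [Polynomial.degree_eq_natDegree hf0, hdeg]
    exact Nat.cast_ne_zero.mpr (by omega))
  have hrank : finrank k (AdjoinRoot f) = 2 * m + 1 := by
    rw [PowerBasis.finrank (AdjoinRoot.powerBasis hf0), AdjoinRoot.powerBasis_dim, hdeg]
  -- α is a unit
  have hαunit : IsUnit α := by
    have hker : ∀ x : AdjoinRoot f, α * x = 0 → x = 0 := fun x hx =>
      hnd x fun y => by rw [hx, zero_mul, map_zero]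
    have hinj : Function.Injective (LinearMap.mulLeft k α) :=
      LinearMap.ker_eq_bot.mp (LinearMap.ker_eq_bot'.mpr fun x hx =>
        hker x (by simpa using hx))
    obtain ⟨z, hz⟩ := LinearMap.injective_iff_surjective.mp hinj 1
    exact IsUnit.of_mul_eq_one z (by simpa using hz)
  -- the bilinear form w
  let Bα : LinearMap.BilinForm k (AdjoinRoot f) :=
    LinearMap.mk₂ k (fun x y => coeffTop (α * x * y))
      (fun x x' y => by simp only [mul_add, add_mul, map_add])
      (fun c x y => by simp only [mul_smul_comm, smul_mul_assoc, map_smul])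
      (fun x y y' => by simp only [mul_add, map_add])
      (fun c x y => by simp only [mul_smul_comm, map_smul])
  have hBαapply : ∀ x y, Bα x y = coeffTop (α * x * y) := fun x y => rfl
  have hBαsymm : ∀ x y, Bα x y = Bα y x := fun x y => by
    rw [hBαapply, hBαapply]; congr 1; ring
  have hBαrefl : Bα.IsRefl := fun x y h => by rw [hBαsymm]; exact h
  have hBαnd : Bα.Nondegenerate := hBαrefl.nondegenerate_iff_separatingLeft.mpr fun x hx => hnd x fun y => hx y
  have horthM : finrank k (Bα.orthogonal M) = m + 1 := by
    rw [LinearMap.BilinForm.finrank_orthogonal hBαnd, hrank, hMdim]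
    omega
  set μθ : AdjoinRoot f →ₗ[k] AdjoinRoot f := LinearMap.mulLeft k θ with hμθ
  have hμθ_apply : ∀ x, μθ x = θ * x := fun x => rfl
  have hMle : M ⊔ M.map μθ ≤ Bα.orthogonal M := by
    apply sup_le
    · intro v hv
      rw [LinearMap.BilinForm.mem_orthogonal_iff]
      intro u hu
      exact hiso u hu v hv
    · rintro _ ⟨w, hw, rfl⟩
      rw [LinearMap.BilinForm.mem_orthogonal_iff]
      intro u hu
      have h0 := hiso' u hu w hw
      show coeffTop (α * u * (θ * w)) = 0
      rw [show α * u * (θ * w) = α * θ * u * w from by ring]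
      exact h0
  -- the descending chain
  have key : ∀ i : ℕ, ∃ N : Submodule k (AdjoinRoot f),
      m ≤ finrank k N + i ∧ (∀ x ∈ N, ∀ j ≤ i, θ ^ j * x ∈ M) ∧
      finrank k ↥(N ⊔ N.map μθ) ≤ finrank k N + 1 := by
    intro i
    induction i with
    | zero =>
      refine ⟨M, by omega, ?_, ?_⟩
      · intro x hx j hj
        have : j = 0 := Nat.le_zero.mp hj
        subst this
        simpa using hx
      · calc finrank k ↥(M ⊔ M.map μθ) ≤ finrank k (Bα.orthogonal M) :=
              Submodule.finrank_mono hMle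
          _ = finrank k M + 1 := by rw [horthM, hMdim]
    | succ i ih =>
      obtain ⟨N, h1, h2, h3⟩ := ih
      have haux := aux_step μθ N
      refine ⟨N ⊓ N.comap μθ, by omega, ?_, ?_⟩
      · intro x hx j hj
        obtain ⟨hx1, hx2⟩ := Submodule.mem_inf.mp hx
        rcases Nat.lt_or_ge j (i + 1) with h | h
        · exact h2 x hx1 j (by omega)
        · have hj' : j = i + 1 := by omega
          subst hj'
          have hθx : θ * x ∈ N := Submodule.mem_comap.mp hx2
          rw [show θ ^ (i + 1) * x = θ ^ i * (θ * x) from by rw [pow_succ]; ring]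
          exact h2 (θ * x) hθx i le_rfl
      · have hle2 : (N ⊓ N.comap μθ) ⊔ (N ⊓ N.comap μθ).map μθ ≤ N := by
          apply sup_le inf_le_left
          rintro _ ⟨w, hw, rfl⟩
          exact (Submodule.mem_inf.mp hw).2
        have h4 := Submodule.finrank_mono hle2
        omega
  obtain ⟨N, hN1, hN2, _⟩ := key (m - 1)
  have hNpos : 0 < finrank k N := by omega
  have hNne : N ≠ ⊥ := by
    intro h
    rw [h, finrank_bot] at hNpos
    omega
  obtain ⟨ℓ, hℓN, hℓ0⟩ := Submodule.exists_mem_ne_zero_of_ne_bot hNne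
  have hpow : ∀ j ≤ m - 1, θ ^ j * ℓ ∈ M := fun j hj => hN2 ℓ hℓN j hj
  -- the key vanishing
  have hβ : ∀ d, d < 2 * m → coeffTop (α * ℓ ^ 2 * θ ^ d) = 0 := by
    intro d hd
    by_cases hcase : d ≤ 2 * m - 2
    · set i := min d (m - 1) with hidef
      set j := d - i with hjdef
      have hi1 : i ≤ m - 1 := min_le_right _ _
      have hj1 : j ≤ m - 1 := by omega
      have hij : i + j = d := by omega
      have h0 := hiso (θ ^ i * ℓ) (hpow i hi1) (θ ^ j * ℓ) (hpow j hj1)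
      rw [show α * ℓ ^ 2 * θ ^ d = α * (θ ^ i * ℓ) * (θ ^ j * ℓ) from by
        rw [← hij, pow_add]; ring]
      exact h0
    · have h0 := hiso' (θ ^ (m - 1) * ℓ) (hpow (m - 1) le_rfl)
        (θ ^ (m - 1) * ℓ) (hpow (m - 1) le_rfl)
      rw [show α * ℓ ^ 2 * θ ^ d = α * θ * (θ ^ (m - 1) * ℓ) * (θ ^ (m - 1) * ℓ) from by
        rw [show d = 1 + (m - 1) + (m - 1) from by omega, pow_add, pow_add, pow_one]; ring]
      exact h0
  -- the plain bilinear form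
  let B0 : LinearMap.BilinForm k (AdjoinRoot f) :=
    LinearMap.mk₂ k (fun x y => coeffTop (x * y))
      (fun x x' y => by simp only [add_mul, map_add])
      (fun c x y => by simp only [smul_mul_assoc, map_smul])
      (fun x y y' => by simp only [mul_add, map_add])
      (fun c x y => by simp only [mul_smul_comm, map_smul])
  have hB0apply : ∀ x y, B0 x y = coeffTop (x * y) := fun x y => rfl
  have hB0symm : ∀ x y, B0 x y = B0 y x := fun x y => by
    rw [hB0apply, hB0apply, mul_comm]
  have hB0refl : B0.IsRefl := fun x y h => by rw [hB0symm]; exact h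
  have hB0nd : B0.Nondegenerate := by
    refine hB0refl.nondegenerate_iff_separatingLeft.mpr ?_
    intro x hx
    refine hnd x fun y => ?_
    have h0 := hx (α * y)
    rw [hB0apply] at h0
    rw [show α * x * y = x * (α * y) from by ring]
    exact h0
  -- the span of low powers of θ
  set S : Submodule k (AdjoinRoot f) :=
    Submodule.span k (Set.range fun i : Fin (2 * m) => θ ^ (i : ℕ)) with hSdef
  have hSdim : finrank k S = 2 * m := by
    have hli0 := (AdjoinRoot.powerBasis hf0).basis.linearIndependent
    rw [(AdjoinRoot.powerBasis hf0).coe_basis] at hli0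
    have hcast : 2 * m ≤ (AdjoinRoot.powerBasis hf0).dim := by
      rw [AdjoinRoot.powerBasis_dim, hdeg]; omega
    have hli : LinearIndependent k (fun i : Fin (2 * m) => θ ^ (i : ℕ)) := by
      have := hli0.comp (Fin.castLE hcast) (Fin.castLE_injective hcast)
      simpa [AdjoinRoot.powerBasis_gen, Function.comp_def, hθdef] using this
    rw [hSdef, finrank_span_eq_card hli, Fintype.card_fin]
  have horth_mem : ∀ x : AdjoinRoot f,
      (∀ d, d < 2 * m → coeffTop (θ ^ d * x) = 0) → x ∈ B0.orthogonal S := by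
    intro x hx
    rw [LinearMap.BilinForm.mem_orthogonal_iff]
    intro y hy
    induction hy using Submodule.span_induction with
    | mem y hy =>
      obtain ⟨d, rfl⟩ := hy
      exact hx d d.2
    | zero => simp [LinearMap.BilinForm.IsOrtho]
    | add y z _ _ hy hz =>
      show B0 (y + z) x = 0
      rw [map_add, LinearMap.add_apply]
      rw [show B0 y x = 0 from hy, show B0 z x = 0 from hz, add_zero]
    | smul a y _ hy =>
      show B0 (a • y) x = 0
      rw [map_smul, LinearMap.smul_apply, show B0 y x = 0 from hy, smul_zero]
  have horthS_dim : finrank k (B0.orthogonal S) = 1 := by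
    rw [LinearMap.BilinForm.finrank_orthogonal hB0nd, hrank, hSdim]
    omega
  have hn1 : f.natDegree - 1 = 2 * m := by omega
  have hspan1 : Submodule.span k {(1 : AdjoinRoot f)} ≤ B0.orthogonal S := by
    rw [Submodule.span_le, Set.singleton_subset_iff]
    refine horth_mem 1 fun d hd => ?_
    rw [mul_one]
    exact hct0 d (by omega)
  have heq : Submodule.span k {(1 : AdjoinRoot f)} = B0.orthogonal S :=
    Submodule.eq_of_le_of_finrank_le hspan1 (by
      rw [horthS_dim, finrank_span_singleton (one_ne_zero : (1 : AdjoinRoot f) ≠ 0)])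
  have hβmem : α * ℓ ^ 2 ∈ B0.orthogonal S := by
    refine horth_mem _ fun d hd => ?_
    rw [mul_comm]
    exact hβ d hd
  rw [← heq] at hβmem
  obtain ⟨a, ha⟩ := Submodule.mem_span_singleton.mp hβmem
  have haeq : α * ℓ ^ 2 = algebraMap k (AdjoinRoot f) a := by
    rw [← ha, Algebra.algebraMap_eq_smul_one]
  have ha0 : a ≠ 0 := by
    intro h
    rw [h, map_zero] at haeq
    have hl2 : ℓ ^ 2 = 0 := (hαunit.mul_right_eq_zero).mp haeq
    obtain ⟨p, rfl⟩ := AdjoinRoot.mk_surjective ℓ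
    have : f ∣ p ^ 2 := by
      rw [← AdjoinRoot.mk_eq_zero, map_pow]
      exact hl2
    have hdvd : f ∣ p := (hsep.squarefree.dvd_pow_iff_dvd two_ne_zero).mp this
    exact hℓ0 (AdjoinRoot.mk_eq_zero.mpr hdvd)
  refine ⟨a, ha0, ℓ, ?_, haeq⟩
  refine IsUnit.of_mul_eq_one (a⁻¹ • (α * ℓ)) ?_
  have hstep : ℓ * (a⁻¹ • (α * ℓ)) = a⁻¹ • (α * ℓ ^ 2) := by
    rw [mul_smul_comm]
    congr 1
    ring
  rw [hstep, haeq, Algebra.algebraMap_eq_smul_one, smul_smul, inv_mul_cancel₀ ha0, one_smul]
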